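/- Let ε ∈ (0, 1/2), α > 1, and M ≥ 0 be real numbers, and set K = 2⌈1/ε⌉ + 1. There exist maps g : [0, M] → [−(0.5+ε)α, (0.5+ε)α]^K and h : [0, M] → [0, M/2] such that for all a, b ∈ [0, M]: min(|a − b|, α) = min( max( ‖g(a) − g(b)‖_∞ , |h(a) − h(b)| ), α ). -/

import Mathlib

set_option maxHeartbeats 2000000 in
/-- There are maps `g : [0,M] → [-(0.5+ε)α, (0.5+ε)α]^K` (with
`K = 2⌈1/ε⌉ + 1`) and `h : [0,M] → [0, M/2]` such that for all `a, b ∈ [0,M]`,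
`min |a-b| α = min (max ‖g a - g b‖_∞ |h a - h b|) α`.  (Here `‖·‖` on `Fin K → ℝ` is the
sup norm.) -/
theorem stmt_3 (ε α M : ℝ) (hε : ε ∈ Set.Ioo (0 : ℝ) (1 / 2)) (hα : 1 < α) (hM : 0 ≤ M)
    (K : ℕ) (hK : K = 2 * ⌈1 / ε⌉₊ + 1) :
    ∃ (g : ℝ → Fin K → ℝ) (h : ℝ → ℝ),
      (∀ a ∈ Set.Icc (0 : ℝ) M,
        (∀ i, g a i ∈ Set.Icc (-((0.5 + ε) * α)) ((0.5 + ε) * α)) ∧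
        h a ∈ Set.Icc (0 : ℝ) (M / 2)) ∧
      (∀ a ∈ Set.Icc (0 : ℝ) M, ∀ b ∈ Set.Icc (0 : ℝ) M,
        min |a - b| α = min (max ‖g a - g b‖ |h a - h b|) α) := by
  obtain ⟨hε0, hε2⟩ := hε
  have hα0 : (0:ℝ) < α := by linarith
  have hK0 : 0 < K := by omega
  have hKR : (0:ℝ) < (K:ℝ) := by exact_mod_cast hK0
  set W : ℝ := (1 + 2*ε) * α with hWdef
  set P : ℝ := (3 + 4*ε) * α with hPdef
  have hW0 : 0 < W := by nlinarith
  have hWα : α < W := by nlinarith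
  have hPW : P = 2*W + α := by rw [hWdef, hPdef]; ring
  have hP0 : 0 < P := by nlinarith
  have hWP2 : 2 * W < P := by rw [hPW]; linarith
  set s : ℝ := P / K with hsdef
  have hs0 : 0 < s := div_pos hP0 hKR
  have hKs : (K:ℝ) * s = P := by rw [hsdef, mul_comm]; exact div_mul_cancel₀ P hKR.ne'
  have hsle : s ≤ 2*ε*α := by
    have h1 : (1:ℝ)/ε ≤ (⌈1/ε⌉₊ : ℝ) := Nat.le_ceil _
    have h2 : (K:ℝ) = 2*(⌈1/ε⌉₊:ℝ) + 1 := by rw [hK]; push_cast; ring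
    have h3 : 2/ε + 1 ≤ (K:ℝ) := by
      have e : (2:ℝ)/ε = 2 * (1/ε) := by ring
      rw [h2, e]; linarith
    rw [hsdef, div_le_iff₀ hKR]
    have h5 : 2*ε*α*(2/ε + 1) ≤ 2*ε*α*(K:ℝ) :=
      mul_le_mul_of_nonneg_left h3 (by positivity)
    have h6 : 2*ε*α*(2/ε + 1) = 4*α + 2*ε*α := by field_simp; ring
    rw [hPdef]; nlinarith
  have hsW : s ≤ W - α := by rw [hWdef]; nlinarith
  -- the wave
  set f : ℝ → ℝ := fun x => min W |x - P * round (x / P)| with hfdef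
  have hf_nonneg : ∀ x, 0 ≤ f x := fun x => le_min hW0.le (abs_nonneg _)
  have hf_le : ∀ x, f x ≤ W := fun x => min_le_left _ _
  -- round is the nearest integer
  have hround : ∀ (q : ℝ) (n : ℤ), |q - round q| ≤ |q - n| := by
    intro q n
    rcases eq_or_ne n (round q) with rfl | hne
    · exact le_rfl
    · have h1 : (1:ℝ) ≤ |((round q : ℤ):ℝ) - (n:ℝ)| := by
        have h0 : (1:ℤ) ≤ |round q - n| := Int.one_le_abs (sub_ne_zero.mpr (Ne.symm hne))
        exact_mod_cast h0
      have h2 : |q - round q| ≤ 1/2 := abs_sub_round q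
      have h3 : |((round q:ℤ):ℝ) - n| ≤ |((round q:ℤ):ℝ) - q| + |q - n| := abs_sub_le _ _ _
      have h4 : |((round q:ℤ):ℝ) - q| = |q - round q| := abs_sub_comm _ _
      linarith
  -- f is 1-Lipschitz
  have habsP : ∀ (x : ℝ) (c : ℝ), |x - P * c| = P * |x/P - c| := by
    intro x c
    have e : P * (x/P - c) = x - P * c := by
      rw [mul_sub, mul_comm P (x/P), div_mul_cancel₀ x hP0.ne']
    rw [← e, abs_mul, abs_of_pos hP0]
  have hdist : ∀ (x : ℝ) (n : ℤ), |x - P * round (x/P)| ≤ |x - P * n| := by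
    intro x n
    have h1 : |x/P - round (x/P)| ≤ |x/P - n| := hround (x/P) n
    rw [habsP x (round (x/P) : ℤ), habsP x (n:ℤ)]
    exact mul_le_mul_of_nonneg_left h1 hP0.le
  have hlip : ∀ x y : ℝ, |f x - f y| ≤ |x - y| := by
    have key : ∀ x y : ℝ, f x - f y ≤ |x - y| := by
      intro x y
      have hc : (0:ℝ) ≤ |x - y| := abs_nonneg _
      have h1 : f x ≤ min W |x - P * round (y/P)| :=
        min_le_min le_rfl (hdist x _)
      have h2 : |x - P * round (y/P)| ≤ |y - P * round (y/P)| + |x - y| := by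
        have h := abs_sub_le x y (P * (round (y/P) : ℤ))
        linarith
      have h3 : min W |x - P * round (y/P)|
          ≤ min W |y - P * round (y/P)| + |x - y| := by
        calc min W |x - P * round (y/P)|
            ≤ min (W + |x - y|) (|y - P * round (y/P)| + |x - y|) :=
              min_le_min (by linarith) h2
          _ = min W |y - P * round (y/P)| + |x - y| := min_add_add_right _ _ _
      have h4 : f y = min W |y - P * round (y/P)| := rfl
      linarith
    intro x y
    rw [abs_sub_le_iff]
    exact ⟨key x y, (key y x).trans_eq (abs_sub_comm y x)⟩
  -- evaluation of f on a fundamental domain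
  have heval : ∀ (n : ℤ) (x : ℝ), 0 ≤ x → x < P → f ((n:ℝ)*P + x) = min W (min x (P - x)) := by
    intro n x hx0 hxP
    have hq : ((n:ℝ)*P + x)/P = (n:ℝ) + x/P := by
      rw [add_div, mul_div_cancel_right₀ _ hP0.ne']
    have hxP0 : 0 ≤ x/P := div_nonneg hx0 hP0.le
    have hxP1 : x/P < 1 := (div_lt_one hP0).mpr hxP
    have hr : round (((n:ℝ)*P + x)/P) = n + round (x/P) := by
      rw [hq, round_intCast_add]
    rcases lt_or_ge (x/P) (1/2) with hhalf | hhalf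
    · have hr0 : round (x/P) = 0 := by
        rw [round_eq, Int.floor_eq_zero_iff]
        constructor
        · linarith
        · linarith
      have hxle : x ≤ P - x := by
        have hx2 : x < P/2 := by
          have := (div_lt_iff₀ hP0).mp hhalf
          linarith
        linarith
      have e : f ((n:ℝ)*P + x) = min W |x| := by
        show min W |(n:ℝ)*P + x - P * (round (((n:ℝ)*P + x)/P) : ℤ)| = min W |x|
        rw [hr, hr0, add_zero]
        congr 1
        push_cast
        ring
      rw [e, abs_of_nonneg hx0, min_eq_left hxle]
    · have hr1 : round (x/P) = 1 := by
        rw [round_eq]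
        have hh1 : (1:ℝ) ≤ x/P + 1/2 := by linarith
        have hh2 : x/P + 1/2 < 1 + 1 := by linarith
        rw [Int.floor_eq_iff]
        · constructor
          · push_cast; linarith
          · push_cast; linarith
      have hxge : P - x ≤ x := by
        have hx2 : P/2 ≤ x := by
          have := (le_div_iff₀ hP0).mp hhalf
          linarith
        linarith
      have e : f ((n:ℝ)*P + x) = min W |x - P| := by
        show min W |(n:ℝ)*P + x - P * (round (((n:ℝ)*P + x)/P) : ℤ)| = min W |x - P|
        rw [hr, hr1]
        congr 1
        push_cast
        ring
      rw [e, abs_of_nonpos (by linarith : x - P ≤ 0), neg_sub, min_eq_right hxge]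
  -- lattice hitting lemma
  have hhit : ∀ c ℓ : ℝ, s ≤ ℓ → ∃ (i : Fin K) (n : ℤ),
      c ≤ (i:ℝ)*s + (n:ℝ)*P ∧ (i:ℝ)*s + (n:ℝ)*P ≤ c + ℓ := by
    intro c ℓ hℓ
    set m : ℤ := ⌈c/s⌉ with hm
    have h1 : c/s ≤ (m:ℝ) := Int.le_ceil _
    have h2 : (m:ℝ) < c/s + 1 := Int.ceil_lt_add_one _
    have hc1 : c ≤ (m:ℝ)*s := by
      have := mul_le_mul_of_nonneg_right h1 hs0.le
      rwa [div_mul_cancel₀ c hs0.ne'] at this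
    have hc2 : (m:ℝ)*s ≤ c + ℓ := by
      have h2' := mul_lt_mul_of_pos_right h2 hs0
      rw [add_mul, div_mul_cancel₀ c hs0.ne', one_mul] at h2'
      linarith
    have hKZ0 : (0:ℤ) < (K:ℤ) := by exact_mod_cast hK0
    have hmod0 : 0 ≤ m % (K:ℤ) := Int.emod_nonneg m (by omega)
    have hmodlt : m % (K:ℤ) < (K:ℤ) := Int.emod_lt_of_pos m hKZ0
    have hilt : (m % (K:ℤ)).toNat < K := by omega
    refine ⟨⟨(m % (K:ℤ)).toNat, hilt⟩, m / (K:ℤ), ?_⟩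
    have hcast : ((⟨(m % (K:ℤ)).toNat, hilt⟩ : Fin K):ℝ)*s + ((m / (K:ℤ) : ℤ):ℝ)*P
        = (m:ℝ)*s := by
      have h7 : ((m % (K:ℤ)).toNat : ℤ) + (K:ℤ) * (m / (K:ℤ)) = m := by
        have := Int.mul_ediv_add_emod m (K:ℤ)
        omega
      have h9 : (((m % (K:ℤ)).toNat:ℕ):ℝ) + (K:ℝ) * ((m / (K:ℤ) : ℤ):ℝ) = (m:ℝ) := by
        exact_mod_cast h7
      have h10 : ((⟨(m % (K:ℤ)).toNat, hilt⟩ : Fin K):ℝ) = (((m % (K:ℤ)).toNat:ℕ):ℝ) := by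
        rfl
      rw [h10, ← hKs]
      linear_combination s * h9
    rw [hcast]
    exact ⟨hc1, hc2⟩
  -- the maps
  set g : ℝ → Fin K → ℝ := fun a i => f (a + (i:ℝ)*s) - W/2 with hgdef
  set hh : ℝ → ℝ := fun a => a/2 with hhdef
  have hgsub : ∀ a b : ℝ, ∀ i : Fin K,
      (g a - g b) i = f (a + (i:ℝ)*s) - f (b + (i:ℝ)*s) := by
    intro a b i
    simp only [hgdef, Pi.sub_apply]
    ring
  -- main pairwise statement for b ≤ a
  have main : ∀ a b : ℝ, b ≤ a →
      min |a - b| α = min (max ‖g a - g b‖ |hh a - hh b|) α := by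
    intro a b hba
    set d : ℝ := a - b with hd
    have hd0 : 0 ≤ d := by rw [hd]; linarith
    have habs : |a - b| = d := abs_of_nonneg (by linarith)
    have hhab : |hh a - hh b| = d/2 := by
      have e : hh a - hh b = d/2 := by simp only [hhdef]; rw [hd]; ring
      rw [e]
      exact abs_of_nonneg (by linarith)
    rcases lt_or_ge d α with hcase | hcase
    · -- small distance: everything exact
      have hcoordle : ∀ i : Fin K, ‖(g a - g b) i‖ ≤ d := by
        intro i
        rw [hgsub, Real.norm_eq_abs]
        have hl := hlip (a + (i:ℝ)*s) (b + (i:ℝ)*s)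
        have e : a + (i:ℝ)*s - (b + (i:ℝ)*s) = d := by rw [hd]; ring
        rw [e, abs_of_nonneg hd0] at hl
        exact hl
      have hnormle : ‖g a - g b‖ ≤ d := by
        rw [pi_norm_le_iff_of_nonneg hd0]
        exact hcoordle
      -- exact coordinate
      obtain ⟨i, n, hr1, hr2⟩ := hhit (-b) (W - d) (by linarith)
      set r : ℝ := b + ((i:ℝ)*s + (n:ℝ)*P) with hrdef
      have hr0 : 0 ≤ r := by rw [hrdef]; linarith
      have hrW : r ≤ W - d := by rw [hrdef]; linarith
      have hbis : b + (i:ℝ)*s = ((-n : ℤ):ℝ)*P + r := by rw [hrdef]; push_cast; ring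
      have hais : a + (i:ℝ)*s = ((-n : ℤ):ℝ)*P + (r + d) := by
        rw [hrdef]; push_cast; rw [hd]; ring
      have hfb : f (b + (i:ℝ)*s) = r := by
        rw [hbis, heval (-n) r hr0 (by linarith)]
        rw [min_eq_right ((min_le_left r (P - r)).trans (by linarith)),
          min_eq_left (by linarith : r ≤ P - r)]
      have hfa : f (a + (i:ℝ)*s) = r + d := by
        rw [hais, heval (-n) (r + d) (by linarith) (by linarith)]
        rw [min_eq_right ((min_le_left (r + d) (P - (r + d))).trans (by linarith)),
          min_eq_left (by linarith : r + d ≤ P - (r + d))]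
      have hnormge : d ≤ ‖g a - g b‖ := by
        have h1 : ‖(g a - g b) i‖ = d := by
          rw [hgsub, hfa, hfb, Real.norm_eq_abs,
            show r + d - r = d by ring]
          exact abs_of_nonneg hd0
        calc d = ‖(g a - g b) i‖ := h1.symm
          _ ≤ ‖g a - g b‖ := norm_le_pi_norm _ i
      have hnorm : ‖g a - g b‖ = d := le_antisymm hnormle hnormge
      rw [habs, hnorm, hhab]
      rw [max_eq_left (by linarith)]
    · -- large distance: both sides equal α
      rw [habs, min_eq_right hcase]
      have hmax : α ≤ max ‖g a - g b‖ |hh a - hh b| := by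
        rcases le_or_gt (2*α) d with hbig | hmid
        · refine le_trans ?_ (le_max_right _ _)
          rw [hhab]; linarith
        · refine le_trans ?_ (le_max_left _ _)
          obtain ⟨i, n, hr1, hr2⟩ := hhit (-b) (W - α) hsW
          set r : ℝ := b + ((i:ℝ)*s + (n:ℝ)*P) with hrdef
          have hr0 : 0 ≤ r := by rw [hrdef]; linarith
          have hrW : r ≤ W - α := by rw [hrdef]; linarith
          have hbis : b + (i:ℝ)*s = ((-n : ℤ):ℝ)*P + r := by rw [hrdef]; push_cast; ring
          have hais : a + (i:ℝ)*s = ((-n : ℤ):ℝ)*P + (r + d) := by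
            rw [hrdef]; push_cast; rw [hd]; ring
          have hfb : f (b + (i:ℝ)*s) = r := by
            rw [hbis, heval (-n) r hr0 (by linarith)]
            rw [min_eq_right ((min_le_left r (P - r)).trans (by linarith)),
              min_eq_left (by linarith : r ≤ P - r)]
          have hfa : f (a + (i:ℝ)*s) = min W (min (r + d) (P - (r + d))) := by
            rw [hais]
            exact heval (-n) (r + d) (by linarith) (by rw [hPW]; linarith)
          have hge : α ≤ f (a + (i:ℝ)*s) - f (b + (i:ℝ)*s) := by
            rw [hfa, hfb]
            have b1 : r + α ≤ W := by linarith
            have b2 : r + α ≤ r + d := by linarith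
            have b3 : r + α ≤ P - (r + d) := by rw [hPW]; linarith
            have hm : r + α ≤ min W (min (r + d) (P - (r + d))) :=
              le_min b1 (le_min b2 b3)
            linarith
          have h1 : α ≤ ‖(g a - g b) i‖ := by
            rw [hgsub, Real.norm_eq_abs]
            exact le_trans hge (le_abs_self _)
          exact h1.trans (norm_le_pi_norm _ i)
      rw [min_eq_right hmax]
  refine ⟨g, hh, ?_, ?_⟩
  · intro a _
    constructor
    · intro i
      have h1 : 0 ≤ f (a + (i:ℝ)*s) := hf_nonneg _
      have h2 : f (a + (i:ℝ)*s) ≤ W := hf_le _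
      have e : (0.5 + ε) * α = W/2 := by rw [hWdef]; ring
      constructor
      · show -((0.5 + ε) * α) ≤ f (a + (i:ℝ)*s) - W/2
        rw [e]; linarith
      · show f (a + (i:ℝ)*s) - W/2 ≤ (0.5 + ε) * α
        rw [e]; linarith
    · obtain ⟨ha0, haM⟩ := ‹a ∈ Set.Icc (0:ℝ) M›
      constructor
      · show (0:ℝ) ≤ a/2
        linarith
      · show a/2 ≤ M/2
        linarith
  · intro a _ b _
    rcases le_total b a with hba | hab
    · exact main a b hba
    · rw [abs_sub_comm a b, norm_sub_rev (g a) (g b), abs_sub_comm (hh a) (hh b)]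
      exact main b a hab
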